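/- If a and b are coprime positive integers with a even and b odd, then 8ab(a²+b²) is not a perfect square. -/

import Mathlib

lemma pow_split {a b c : ℕ} (k : ℕ) (h : Nat.Coprime a b) (heq : a * b = c ^ k) :
    (∃ d, a = d ^ k) ∧ (∃ d, b = d ^ k) :=
  ⟨exists_eq_pow_of_mul_eq_pow (by simpa [Nat.isUnit_iff, gcd_eq_nat_gcd] using h) heq,
   exists_eq_pow_of_mul_eq_pow (by simpa [Nat.isUnit_iff, gcd_eq_nat_gcd] using h.symm)
     (by rwa [mul_comm] at heq)⟩

lemma descent : ∀ t : ℕ, ∀ e f : ℕ, Nat.Coprime e f → 0 < e → Odd f →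
    4 * e ^ 4 + f ^ 4 ≠ t ^ 2 := by
  intro t
  induction t using Nat.strong_induction_on with
  | _ t IH =>
  intro e f hef he hf heq
  have hf2 : Odd (f ^ 2) := hf.pow
  have hf4 : f ^ 4 % 2 = 1 := Nat.odd_iff.mp hf.pow
  have ht : t % 2 = 1 := by
    rcases Nat.even_or_odd t with h | h
    · exfalso
      have h2 : Even (t ^ 2) := h.pow_of_ne_zero (by norm_num)
      rw [← heq, Nat.even_iff] at h2
      omega
    · exact Nat.odd_iff.mp h
  have hf2t : f ^ 2 ≤ t := by
    have h1 : (f ^ 2) ^ 2 ≤ t ^ 2 := by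
      have h0 : (f ^ 2) ^ 2 = f ^ 4 := by ring
      omega
    exact (Nat.pow_le_pow_iff_left (by norm_num)).mp h1
  obtain ⟨A, hA⟩ : ∃ A, t = f ^ 2 + 2 * A := by
    have := Nat.odd_iff.mp hf2
    exact ⟨(t - f ^ 2) / 2, by omega⟩
  have H : 4 * e ^ 4 + f ^ 4 = (f ^ 2 + 2 * A) ^ 2 := by rw [← hA]; exact heq
  have hAB : A * (A + f ^ 2) = e ^ 4 := by
    have h4 : 4 * (A * (A + f ^ 2)) = 4 * e ^ 4 := by zify at H ⊢; linear_combination -H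
    omega
  have hApos : 0 < A := by
    rcases Nat.eq_zero_or_pos A with h | h
    · exfalso; rw [h] at hAB; simp at hAB
      have := pow_pos he 4; omega
    · exact h
  have hcopAB : Nat.Coprime A (A + f ^ 2) := by
    rw [Nat.coprime_self_add_right]
    have h1 : Nat.Coprime (e ^ 4) (f ^ 2) := Nat.Coprime.pow 4 2 hef
    exact Nat.Coprime.coprime_dvd_left ⟨A + f ^ 2, hAB.symm⟩ h1
  obtain ⟨⟨α, hα⟩, ⟨β, hβ⟩⟩ := pow_split 4 hcopAB hAB
  have hαβ : Nat.Coprime α β := by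
    have h1 : Nat.Coprime (α ^ 4) (β ^ 4) := by rwa [hβ, hα] at hcopAB
    exact (Nat.coprime_pow_left_iff (by norm_num) _ _).mp
      ((Nat.coprime_pow_right_iff (by norm_num) _ _).mp h1)
  have hαpos : 0 < α := by
    rcases Nat.eq_zero_or_pos α with h | h
    · exfalso; rw [h] at hα; simp at hα; omega
    · exact h
  have key : β ^ 4 = α ^ 4 + f ^ 2 := by rw [← hα, ← hβ]
  have hab2 : α ^ 2 ≤ β ^ 2 := by
    have h1 : (α ^ 2) ^ 2 ≤ (β ^ 2) ^ 2 := by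
      have h0 : (α ^ 2) ^ 2 = α ^ 4 := by ring
      have h0' : (β ^ 2) ^ 2 = β ^ 4 := by ring
      omega
    exact (Nat.pow_le_pow_iff_left (by norm_num)).mp h1
  obtain ⟨P, hP⟩ : ∃ P, β ^ 2 = α ^ 2 + P := ⟨β ^ 2 - α ^ 2, by omega⟩
  have hPf : P * (P + 2 * α ^ 2) = f ^ 2 := by
    zify at key hP ⊢; linear_combination key - ((β:ℤ) ^ 2 + (α:ℤ) ^ 2 + (P:ℤ)) * hP
  have hPodd : P % 2 = 1 := by
    rcases Nat.even_or_odd P with h | h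
    · exfalso
      have : Even (f ^ 2) := by rw [← hPf]; exact h.mul_right _
      rw [Nat.even_iff] at this
      have := Nat.odd_iff.mp hf2; omega
    · exact Nat.odd_iff.mp h
  have hcopP : Nat.Coprime P (P + 2 * α ^ 2) := by
    rw [Nat.coprime_self_add_right]
    have hPα : Nat.Coprime P (α ^ 2) := by
      have h1 : Nat.Coprime (α ^ 2) (β ^ 2) := Nat.Coprime.pow 2 2 hαβ
      rw [hP, Nat.coprime_self_add_right] at h1
      exact h1.symm
    exact Nat.Coprime.mul_right (Nat.coprime_two_right.mpr (Nat.odd_iff.mpr hPodd)) hPα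
  obtain ⟨⟨p, hp⟩, ⟨q, hq⟩⟩ := pow_split 2 hcopP hPf
  have hpodd : p % 2 = 1 := by
    rcases Nat.even_or_odd p with h | h
    · exfalso
      have : Even P := by rw [hp]; exact h.pow_of_ne_zero (by norm_num)
      rw [Nat.even_iff] at this; omega
    · exact Nat.odd_iff.mp h
  have hq2 : q ^ 2 = p ^ 2 + 2 * α ^ 2 := by rw [← hq, ← hp]
  have hpq : p < q := by
    have h1 : p ^ 2 < q ^ 2 := by nlinarith [hq2, pow_pos hαpos 2]
    exact lt_of_pow_lt_pow_left₀ 2 (Nat.zero_le _) h1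
  have hqodd : q % 2 = 1 := by
    rcases Nat.even_or_odd q with h | h
    · exfalso
      have h2 : Even (q ^ 2) := h.pow_of_ne_zero (by norm_num)
      rw [hq2, Nat.even_iff] at h2
      have : Even (α ^ 2) → Even (2 * α ^ 2) := fun _ => even_two_mul _
      have h3 := Nat.even_iff.mp (even_two_mul (α ^ 2))
      have hpo : p ^ 2 % 2 = 1 := Nat.odd_iff.mp ((Nat.odd_iff.mpr hpodd).pow)
      omega
    · exact Nat.odd_iff.mp h
  obtain ⟨G, hG⟩ : ∃ G, q = p + 2 * G := ⟨(q - p) / 2, by omega⟩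
  have hGpos : 0 < G := by omega
  have hG2 : α ^ 2 = 2 * (G * (p + G)) := by
    have h1 : 2 * α ^ 2 = 4 * (G * (p + G)) := by
      zify at hq2 hG ⊢
      have hq2' : ((p:ℤ) + 2 * G) ^ 2 = p ^ 2 + 2 * α ^ 2 := by rw [← hG]; exact hq2
      linear_combination -hq2'
    omega
  have hαeven : α % 2 = 0 := by
    rcases Nat.even_or_odd α with h | h
    · exact Nat.even_iff.mp h
    · exfalso
      have := Nat.odd_iff.mp (h.pow (n := 2))
      omega
  obtain ⟨w, hw⟩ : ∃ w, α = 2 * w := ⟨α / 2, by omega⟩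
  have hGw : G * (p + G) = 2 * w ^ 2 := by
    have h1 : 2 * (G * (p + G)) = 2 * (2 * w ^ 2) := by
      rw [← hG2, hw]; ring
    omega
  have hwpos : 0 < w := by
    rcases Nat.eq_zero_or_pos w with h | h
    · exfalso; rw [h] at hw; omega
    · exact h
  have hcopG : Nat.Coprime G (p + G) := by
    have hpq2 : Nat.Coprime (p ^ 2) (q ^ 2) := by rwa [hq, hp] at hcopP
    have hpq1 : Nat.Coprime p q := (Nat.coprime_pow_left_iff (by norm_num) _ _).mp
      ((Nat.coprime_pow_right_iff (by norm_num) _ _).mp hpq2)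
    have h1 : Nat.Coprime p (2 * G) := by
      have := hpq1; rw [hG, Nat.coprime_self_add_right] at this; exact this
    have h2 : Nat.Coprime p G := Nat.Coprime.coprime_dvd_right ⟨2, by ring⟩ h1
    rw [add_comm p G, Nat.coprime_self_add_right]
    exact h2.symm
  -- now split on parity of G
  have hβsq : β ^ 2 = p ^ 2 + 2 * (G * (p + G)) := by
    omega
  have hid : ∀ x y : ℕ, x ^ 2 + (y + x) ^ 2 = y ^ 2 + 2 * (x * (y + x)) := by
    intro x y; ring
  have hβG : β ^ 2 = G ^ 2 + (p + G) ^ 2 := by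
    have := hid G p; omega
  have main : ∃ E F : ℕ, Nat.Coprime E F ∧ 0 < E ∧ Odd F ∧ 4 * E ^ 4 + F ^ 4 = β ^ 2 := by
    rcases Nat.even_or_odd G with hGe | hGo
    · -- G even : G = 2 G₁, G₁ = E^2, p + G = F^2
      obtain ⟨G1, hG1⟩ : ∃ G1, G = 2 * G1 := ⟨G / 2, by rw [Nat.even_iff] at hGe; omega⟩
      have hsplit : G1 * (p + G) = w ^ 2 := by
        have h1 : 2 * (G1 * (p + G)) = 2 * w ^ 2 := by rw [← hGw, hG1]; ring
        omega
      have hcop1 : Nat.Coprime G1 (p + G) :=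
        Nat.Coprime.coprime_dvd_left ⟨2, by rw [hG1]; ring⟩ hcopG
      obtain ⟨⟨E, hE⟩, ⟨F, hF⟩⟩ := pow_split 2 hcop1 hsplit
      refine ⟨E, F, ?_, ?_, ?_, ?_⟩
      · have : Nat.Coprime (E ^ 2) (F ^ 2) := by rwa [hF, hE] at hcop1
        exact (Nat.coprime_pow_left_iff (by norm_num) _ _).mp
          ((Nat.coprime_pow_right_iff (by norm_num) _ _).mp this)
      · rcases Nat.eq_zero_or_pos E with h | h
        · exfalso; rw [h] at hE; simp at hE; omega
        · exact h
      · rcases Nat.even_or_odd F with h | h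
        · exfalso
          have h2 : Even (F ^ 2) := h.pow_of_ne_zero (by norm_num)
          rw [← hF, Nat.even_iff] at h2
          rw [Nat.even_iff] at hGe
          omega
        · exact h
      · have h1 : 4 * E ^ 4 + F ^ 4 = G ^ 2 + (p + G) ^ 2 := by
          rw [hF, hG1, hE]; ring
        omega
    · -- G odd : p + G even
      obtain ⟨g1, hg1⟩ : ∃ g1, p + G = 2 * g1 := by
        have := Nat.odd_iff.mp hGo
        exact ⟨(p + G) / 2, by omega⟩
      have hsplit : G * g1 = w ^ 2 := by
        have h1 : 2 * (G * g1) = 2 * w ^ 2 := by rw [← hGw, hg1]; ring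
        omega
      have hcop1 : Nat.Coprime G g1 := by
        have := hcopG
        exact Nat.Coprime.coprime_dvd_right ⟨2, by rw [hg1]; ring⟩ this
      obtain ⟨⟨F, hF⟩, ⟨E, hE⟩⟩ := pow_split 2 hcop1 hsplit
      refine ⟨E, F, ?_, ?_, ?_, ?_⟩
      · have : Nat.Coprime (F ^ 2) (E ^ 2) := by rwa [hF, hE] at hcop1
        exact ((Nat.coprime_pow_left_iff (by norm_num) _ _).mp
          ((Nat.coprime_pow_right_iff (by norm_num) _ _).mp this)).symm
      · rcases Nat.eq_zero_or_pos E with h | h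
        · exfalso; rw [h] at hE; simp at hE; omega
        · exact h
      · rcases Nat.even_or_odd F with h | h
        · exfalso
          have h2 : Even (F ^ 2) := h.pow_of_ne_zero (by norm_num)
          rw [← hF, Nat.even_iff] at h2
          have := Nat.odd_iff.mp hGo
          omega
        · exact h
      · have h1 : 4 * E ^ 4 + F ^ 4 = (p + G) ^ 2 + G ^ 2 := by
          rw [hg1, hE, hF]; ring
        omega
  obtain ⟨E, F, hEF, hEpos, hFodd, hfinal⟩ := main
  have hβlt : β < t := by
    have h1 : β ^ 4 < t := by
      rw [← hβ, hA]; omega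
    have h2 : β ≤ β ^ 4 := Nat.le_self_pow (by norm_num) β
    omega
  exact IH β hβlt E F hEF hEpos hFodd hfinal

theorem stmt_16 (a b : ℕ) (h : Nat.Coprime a b) (ha0 : 0 < a) (hb0 : 0 < b)
    (ha : Even a) (hb : Odd b) : ¬ IsSquare (8*a*b*(a^2+b^2)) := by
  rintro ⟨z, hz⟩
  obtain ⟨c, hc⟩ := ha
  have hc' : a = 2 * c := by omega
  have hcpos : 0 < c := by omega
  have hcb : Nat.Coprime c b := Nat.Coprime.coprime_dvd_left ⟨2, by omega⟩ h
  have h16 : 16 * (c * (b * (4 * c ^ 2 + b ^ 2))) = z * z := by rw [← hz, hc']; ring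
  have hzeven : z % 2 = 0 := by
    rcases Nat.even_or_odd z with h' | h'
    · exact Nat.even_iff.mp h'
    · exfalso; have := Nat.odd_iff.mp (h'.mul h'); omega
  obtain ⟨u, hu⟩ : ∃ u, z = 2 * u := ⟨z / 2, by omega⟩
  have hzz : z * z = 4 * (u * u) := by rw [hu]; ring
  have hueven : u % 2 = 0 := by
    rcases Nat.even_or_odd u with h' | h'
    · exact Nat.even_iff.mp h'
    · exfalso; have := Nat.odd_iff.mp (h'.mul h'); omega
  obtain ⟨w, hw⟩ : ∃ w, u = 2 * w := ⟨u / 2, by omega⟩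
  have huu : u * u = 4 * (w * w) := by rw [hw]; ring
  have hsq : c * (b * (4 * c ^ 2 + b ^ 2)) = w ^ 2 := by
    have : w ^ 2 = w * w := by ring
    omega
  have hcop2 : Nat.Coprime c (4 * c ^ 2 + b ^ 2) := by
    have h1 : Nat.Coprime c (b ^ 2) := Nat.Coprime.pow_right 2 hcb
    have h2 : Nat.Coprime c (b ^ 2 + c * (4 * c)) :=
      (Nat.coprime_add_mul_left_right c (b ^ 2) (4 * c)).mpr h1
    have h3 : b ^ 2 + c * (4 * c) = 4 * c ^ 2 + b ^ 2 := by ring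
    rwa [h3] at h2
  have hcop1 : Nat.Coprime c (b * (4 * c ^ 2 + b ^ 2)) := Nat.Coprime.mul_right hcb hcop2
  obtain ⟨⟨r, hr⟩, ⟨m, hm⟩⟩ := pow_split 2 hcop1 hsq
  have hcop3 : Nat.Coprime b (4 * c ^ 2 + b ^ 2) := by
    have h1 : Nat.Coprime b (4 * c ^ 2) := by
      have hb4 : Nat.Coprime b 4 := by
        have : Nat.Coprime b (2 ^ 2) :=
          Nat.Coprime.pow_right 2 (Nat.coprime_two_right.mpr hb)
        simpa using this
      exact Nat.Coprime.mul_right hb4 (Nat.Coprime.pow_right 2 hcb.symm)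
    have h2 : Nat.Coprime b (4 * c ^ 2 + b * b) :=
      (Nat.coprime_add_mul_left_right b (4 * c ^ 2) b).mpr h1
    have h3 : 4 * c ^ 2 + b * b = 4 * c ^ 2 + b ^ 2 := by ring
    rwa [h3] at h2
  obtain ⟨⟨s, hs⟩, ⟨t, ht⟩⟩ := pow_split 2 hcop3 hm
  have hrs : Nat.Coprime r s := by
    have h1 : Nat.Coprime (r ^ 2) (s ^ 2) := by rwa [hr, hs] at hcb
    exact (Nat.coprime_pow_left_iff (by norm_num) _ _).mp
      ((Nat.coprime_pow_right_iff (by norm_num) _ _).mp h1)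
  have hrpos : 0 < r := by
    rcases Nat.eq_zero_or_pos r with h' | h'
    · exfalso; rw [h'] at hr; simp at hr; omega
    · exact h'
  have hsodd : Odd s := by
    rcases Nat.even_or_odd s with h' | h'
    · exfalso
      have h2 : Even (s ^ 2) := h'.pow_of_ne_zero (by norm_num)
      rw [← hs, Nat.even_iff] at h2
      have := Nat.odd_iff.mp hb
      omega
    · exact h'
  have hfinal : 4 * r ^ 4 + s ^ 4 = t ^ 2 := by
    rw [← ht, hr, hs]; ring
  exact descent t r s hrs hrpos hsodd hfinal
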